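/- Let M be an Orlicz function, 1 ≤ p < ∞ and m ≥ 1, n ≥ 1 integers. Then C_p(M, Δ_m^n) = { real sequences x = (x_k)_{k≥1} : there exists ρ > 0 with Σ_{i=1}^∞ ((1/i) Σ_{k=1}^{i} M(|Δ_m^n x_k|/ρ))^p < ∞ } is a complete metric space with respect to the metric f₁(x,y) = Σ_{r=1}^{mn} |x_r − y_r| + inf{ ρ > 0 : (Σ_{i=1}^∞ ((1/i) Σ_{k=1}^{i} M(|Δ_m^n x_k − Δ_m^n y_k|/ρ))^p)^{1/p} ≤ 1 }. -/

import Mathlib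

/-!
Statement 7 (Paper: Proposition 3.2(i)).  `C_p(M, Δ_m^n)` is a complete metric
space with respect to the metric `f₁`.  Sequences are indexed so that `x k`
represents the paper's `x_{k+1}` (so `∑_{r=1}^{mn}` becomes a sum over
`Finset.range (m*n)`).
-/

open scoped ENNReal

/-- An Orlicz function. -/
def IsOrliczFunction (M : ℝ → ℝ) : Prop :=
  ContinuousOn M (Set.Ici 0) ∧ MonotoneOn M (Set.Ici 0) ∧ ConvexOn ℝ (Set.Ici 0) M ∧
    M 0 = 0 ∧ (∀ x : ℝ, 0 < x → 0 < M x) ∧ Filter.Tendsto M Filter.atTop Filter.atTop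

/-- The generalized difference operator: `Δ_m^0 x = x` and
`Δ_m^{n+1} x k = Δ_m^n x k - Δ_m^n x (k + m)`. -/
def delta (m : ℕ) : ℕ → (ℕ → ℝ) → ℕ → ℝ
  | 0, x => x
  | n + 1, x => fun k => delta m n x k - delta m n x (k + m)

/-- The Cesàro average `(1/i) ∑_{k=1}^{i} M (|x_k| / ρ)`, where `i` here is `i+1`. -/
noncomputable def cesTerm (M : ℝ → ℝ) (x : ℕ → ℝ) (ρ : ℝ) (i : ℕ) : ℝ :=
  (1 / (i + 1 : ℝ)) * ∑ k ∈ Finset.range (i + 1), M (|x k| / ρ)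

/-- `∑_{i=1}^∞ ((1/i) ∑_{k=1}^{i} M(|x_k|/ρ))^p`, valued in `ℝ≥0∞`. -/
noncomputable def cesaroSum (M : ℝ → ℝ) (p : ℝ) (x : ℕ → ℝ) (ρ : ℝ) : ℝ≥0∞ :=
  ∑' i : ℕ, ENNReal.ofReal (cesTerm M x ρ i) ^ p

/-- The space `C_p(M, Δ_m^n)`. -/
def CpMDelta (M : ℝ → ℝ) (p : ℝ) (m n : ℕ) : Set (ℕ → ℝ) :=
  {x | ∃ ρ > 0, cesaroSum M p (delta m n x) ρ < ⊤}

/-- The metric `f₁`. -/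
noncomputable def f1 (M : ℝ → ℝ) (p : ℝ) (m n : ℕ) (x y : ℕ → ℝ) : ℝ :=
  (∑ r ∈ Finset.range (m * n), |x r - y r|) +
    sInf {ρ : ℝ | 0 < ρ ∧
      (cesaroSum M p (fun k => delta m n x k - delta m n y k) ρ) ^ (1 / p) ≤ 1}


namespace CpAux

lemma delta_sub (m n : ℕ) (x y : ℕ → ℝ) (k : ℕ) :
    delta m n (fun j => x j - y j) k = delta m n x k - delta m n y k := by
  induction n generalizing k with
  | zero => rfl
  | succ n ih => simp only [delta, ih]; ring

lemma delta_zero_fun (m n : ℕ) (k : ℕ) : delta m n (fun _ => (0:ℝ)) k = 0 := by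
  induction n generalizing k with
  | zero => rfl
  | succ n ih => simp only [delta, ih, sub_zero]

lemma delta_comp (m n : ℕ) (x : ℕ → ℝ) :
    delta m (n + 1) x = delta m n (delta m 1 x) := by
  induction n with
  | zero => rfl
  | succ n ih =>
    funext k
    show delta m (n+1) x k - delta m (n+1) x (k+m) = _
    rw [ih]
    rfl

lemma delta_comm (m n : ℕ) (x : ℕ → ℝ) :
    delta m n (delta m 1 x) = delta m 1 (delta m n x) := by
  induction n with
  | zero => rfl
  | succ n ih =>
    funext k
    have h1 := congrFun ih k
    have h2 := congrFun ih (k + m)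
    simp only [delta] at h1 h2 ⊢
    linarith

lemma delta_succ (m n : ℕ) (x : ℕ → ℝ) :
    delta m (n + 1) x = delta m 1 (delta m n x) := by
  rw [delta_comp, delta_comm]

/-- `delta m n x k` only depends on `x i` for `k ≤ i ≤ k + n*m`. -/
lemma delta_vanish (m : ℕ) (x : ℕ → ℝ) : ∀ n k, (∀ i, k ≤ i → i ≤ k + n * m → x i = 0) →
    delta m n x k = 0 := by
  intro n
  induction n with
  | zero => intro k h; exact h k le_rfl (by simp)
  | succ n ih =>
    intro k h
    show delta m n x k - delta m n x (k + m) = 0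
    rw [ih k fun i h1 h2 => h i h1 (by rw [Nat.succ_mul]; omega),
      ih (k + m) fun i h1 h2 => h i (le_trans (Nat.le_add_right _ _) h1)
        (by rw [Nat.succ_mul]; omega)]
    ring

lemma delta_one_zero (m : ℕ) (hm : 1 ≤ m) (x : ℕ → ℝ)
    (h0 : ∀ r < m, x r = 0) (hd : ∀ k, delta m 1 x k = 0) : ∀ k, x k = 0 := by
  intro k
  induction k using Nat.strong_induction_on with
  | _ k ih =>
    rcases lt_or_ge k m with h | h
    · exact h0 k h
    · have := hd (k - m)
      simp only [delta] at this
      have hk : k - m + m = k := Nat.sub_add_cancel h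
      rw [hk] at this
      have := ih (k - m) (by omega)
      linarith [hd (k-m)]

lemma delta_n_zero (m : ℕ) (hm : 1 ≤ m) : ∀ n, 1 ≤ n → ∀ x : ℕ → ℝ,
    (∀ r < m * n, x r = 0) → (∀ k, delta m n x k = 0) → ∀ k, x k = 0 := by
  intro n hn
  induction n, hn using Nat.le_induction with
  | base => intro x h0 hd; exact delta_one_zero m hm x (fun r hr => h0 r (by omega)) hd
  | succ n hn ih =>
    intro x h0 hd
    have hw : ∀ k, delta m n x k = 0 := by
      have hd1 : ∀ k, delta m 1 (delta m n x) k = 0 := by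
        intro k
        rw [← congrFun (delta_succ m n x) k]
        exact hd k
      -- delta m n x vanishes on first m coords
      have hv : ∀ r < m, delta m n x r = 0 := by
        intro r hr
        exact delta_vanish m x n r fun i h1 h2 => h0 i (by nlinarith)
      exact delta_one_zero m hm _ hv hd1
    exact ih x (fun r hr => h0 r (by nlinarith)) hw

/-- solve `delta m 1 x = y` with prescribed first `m` values. -/
noncomputable def solveD (m : ℕ) (a y : ℕ → ℝ) : ℕ → ℝ :=
  fun k => a (k % m) - ∑ i ∈ Finset.range (k / m), y (i * m + k % m)

lemma solveD_lt (m : ℕ) (a y : ℕ → ℝ) {k : ℕ} (hk : k < m) : solveD m a y k = a k := by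
  simp [solveD, Nat.mod_eq_of_lt hk, Nat.div_eq_of_lt hk]

lemma solveD_delta (m : ℕ) (hm : 1 ≤ m) (a y : ℕ → ℝ) (k : ℕ) :
    delta m 1 (solveD m a y) k = y k := by
  show solveD m a y k - solveD m a y (k + m) = y k
  unfold solveD
  rw [Nat.add_mod_right, Nat.add_div_right _ hm, Finset.sum_range_succ]
  have : k / m * m + k % m = k := Nat.div_add_mod' k m
  rw [this]
  ring

lemma exists_sol (m : ℕ) (hm : 1 ≤ m) : ∀ n, 1 ≤ n → ∀ a w : ℕ → ℝ,
    ∃ x : ℕ → ℝ, (∀ r < m * n, x r = a r) ∧ (∀ k, delta m n x k = w k) := by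
  intro n hn
  induction n, hn using Nat.le_induction with
  | base =>
    intro a w
    exact ⟨solveD m a w, fun r hr => solveD_lt m a w (by omega),
      solveD_delta m hm a w⟩
  | succ n hn ih =>
    intro a w
    obtain ⟨y, hy0, hyd⟩ := ih (fun k => a k - a (k + m)) w
    refine ⟨solveD m a y, ?_, ?_⟩
    · intro r hr
      induction r using Nat.strong_induction_on with
      | _ r ihr =>
        rcases lt_or_ge r m with h | h
        · exact solveD_lt m a y h
        · have h1 : delta m 1 (solveD m a y) (r - m) = y (r - m) :=
            solveD_delta m hm a y (r - m)
          simp only [delta] at h1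
          have hk : r - m + m = r := Nat.sub_add_cancel h
          rw [hk] at h1
          have h2 : solveD m a y (r - m) = a (r - m) := ihr (r - m) (by omega) (by omega)
          have h3 : y (r - m) = a (r - m) - a (r - m + m) := hy0 (r - m) (by nlinarith)
          rw [hk] at h3
          linarith
    · intro k
      rw [delta_comp]
      have : delta m 1 (solveD m a y) = y := funext (solveD_delta m hm a y)
      rw [this]
      exact hyd k

section Analysis

open Filter Topology

variable {M : ℝ → ℝ} {p : ℝ}

lemma M_nonneg (hM : IsOrliczFunction M) {x : ℝ} (hx : 0 ≤ x) : 0 ≤ M x := by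
  have := hM.2.1 (Set.mem_Ici.2 le_rfl) (Set.mem_Ici.2 hx) hx
  rw [hM.2.2.2.1] at this; exact this

lemma M_tri (hM : IsOrliczFunction M) {a b ρ₁ ρ₂ : ℝ} (h1 : 0 < ρ₁) (h2 : 0 < ρ₂) :
    M (|a + b| / (ρ₁ + ρ₂)) ≤
      ρ₁ / (ρ₁ + ρ₂) * M (|a| / ρ₁) + ρ₂ / (ρ₁ + ρ₂) * M (|b| / ρ₂) := by
  have h12 : 0 < ρ₁ + ρ₂ := by linarith
  have key := hM.2.2.1.2 (Set.mem_Ici.2 (div_nonneg (abs_nonneg a) h1.le))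
    (Set.mem_Ici.2 (div_nonneg (abs_nonneg b) h2.le))
    (div_nonneg h1.le h12.le) (div_nonneg h2.le h12.le)
    (by field_simp)
  simp only [smul_eq_mul] at key
  have harg : ρ₁ / (ρ₁ + ρ₂) * (|a| / ρ₁) + ρ₂ / (ρ₁ + ρ₂) * (|b| / ρ₂)
      = (|a| + |b|) / (ρ₁ + ρ₂) := by field_simp
  rw [harg] at key
  refine le_trans (hM.2.1 ?_ ?_ ?_) key
  · exact Set.mem_Ici.2 (div_nonneg (abs_nonneg _) h12.le)
  · exact Set.mem_Ici.2 (div_nonneg (by positivity) h12.le)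
  · gcongr
    exact abs_add_le a b

lemma M_shrink (hM : IsOrliczFunction M) {x t : ℝ} (hx : 0 ≤ x) (ht0 : 0 ≤ t) (ht : t ≤ 1) :
    M (t * x) ≤ t * M x := by
  have key := hM.2.2.1.2 (Set.mem_Ici.2 hx) (Set.mem_Ici.2 (le_refl (0:ℝ)))
    ht0 (by linarith : (0:ℝ) ≤ 1 - t) (by ring)
  simp only [smul_eq_mul, mul_zero, add_zero, hM.2.2.2.1] at key
  linarith

lemma cesTerm_nonneg (hM : IsOrliczFunction M) {ρ : ℝ} (hρ : 0 < ρ) (x : ℕ → ℝ) (i : ℕ) :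
    0 ≤ cesTerm M x ρ i :=
  mul_nonneg (by positivity)
    (Finset.sum_nonneg fun k _ => M_nonneg hM (by positivity))

lemma cesTerm_anti (hM : IsOrliczFunction M) {ρ ρ' : ℝ} (h : 0 < ρ) (h' : ρ ≤ ρ')
    (x : ℕ → ℝ) (i : ℕ) : cesTerm M x ρ' i ≤ cesTerm M x ρ i := by
  unfold cesTerm
  have h'' : 0 < ρ' := lt_of_lt_of_le h h'
  refine mul_le_mul_of_nonneg_left (Finset.sum_le_sum fun k _ => ?_) (by positivity)
  refine hM.2.1 (Set.mem_Ici.2 (by positivity)) (Set.mem_Ici.2 (by positivity)) ?_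
  gcongr

lemma cesaroSum_anti (hM : IsOrliczFunction M) (hp0 : 0 < p) {ρ ρ' : ℝ} (h : 0 < ρ)
    (h' : ρ ≤ ρ') (x : ℕ → ℝ) : cesaroSum M p x ρ' ≤ cesaroSum M p x ρ :=
  ENNReal.tsum_le_tsum fun i => ENNReal.rpow_le_rpow
    (ENNReal.ofReal_le_ofReal (cesTerm_anti hM h h' x i)) hp0.le

lemma cesaro_congr_abs {d d' : ℕ → ℝ} (h : ∀ k, |d k| = |d' k|) (ρ : ℝ) :
    cesaroSum M p d ρ = cesaroSum M p d' ρ := by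
  unfold cesaroSum cesTerm
  exact tsum_congr fun i => by simp only [h]

lemma cesaro_zero (hM : IsOrliczFunction M) (hp0 : 0 < p) {ρ : ℝ} (hρ : 0 < ρ) :
    cesaroSum M p (fun _ => (0:ℝ)) ρ = 0 := by
  unfold cesaroSum cesTerm
  simp [abs_zero, zero_div, hM.2.2.2.1, ENNReal.zero_rpow_of_pos hp0]

lemma rpow_invp (hp0 : 0 < p) (X : ℝ≥0∞) : (X ^ (1/p)) ^ p = X := by
  rw [← ENNReal.rpow_mul, one_div_mul_cancel hp0.ne', ENNReal.rpow_one]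

lemma rpow_pinv (hp0 : 0 < p) (X : ℝ≥0∞) : (X ^ p) ^ (1/p) = X := by
  rw [← ENNReal.rpow_mul, mul_one_div_cancel hp0.ne', ENNReal.rpow_one]

lemma rpow_le_one_iff' (hp0 : 0 < p) (X : ℝ≥0∞) : X ^ (1/p) ≤ 1 ↔ X ≤ 1 := by
  constructor
  · intro h
    calc X = (X ^ (1/p)) ^ p := (rpow_invp hp0 X).symm
    _ ≤ 1 ^ p := ENNReal.rpow_le_rpow h hp0.le
    _ = 1 := ENNReal.one_rpow p
  · intro h
    calc X ^ (1/p) ≤ 1 ^ (1/p) := ENNReal.rpow_le_rpow h (by positivity)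
    _ = 1 := ENNReal.one_rpow _

/-- `ℓ^p` triangle inequality for `tsum` in `ℝ≥0∞`. -/
lemma lp_tsum (hp : 1 ≤ p) (f g : ℕ → ℝ≥0∞) :
    (∑' i, (f i + g i) ^ p) ^ (1/p) ≤ (∑' i, f i ^ p) ^ (1/p) + (∑' i, g i ^ p) ^ (1/p) := by
  have hp0 : 0 < p := lt_of_lt_of_le one_pos hp
  have key : (∑' i, (f i + g i) ^ p) ≤ ((∑' i, f i ^ p) ^ (1/p) + (∑' i, g i ^ p) ^ (1/p)) ^ p := by
    rw [ENNReal.tsum_eq_iSup_sum]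
    refine iSup_le fun s => ?_
    calc ∑ i ∈ s, (f i + g i) ^ p
        = ((∑ i ∈ s, (f i + g i) ^ p) ^ (1/p)) ^ p := (rpow_invp hp0 _).symm
      _ ≤ ((∑ i ∈ s, f i ^ p) ^ (1/p) + (∑ i ∈ s, g i ^ p) ^ (1/p)) ^ p :=
          ENNReal.rpow_le_rpow (ENNReal.Lp_add_le s f g hp) hp0.le
      _ ≤ ((∑' i, f i ^ p) ^ (1/p) + (∑' i, g i ^ p) ^ (1/p)) ^ p := by
          refine ENNReal.rpow_le_rpow (add_le_add ?_ ?_) hp0.le <;>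
            exact ENNReal.rpow_le_rpow (ENNReal.sum_le_tsum s) (by positivity)
  calc (∑' i, (f i + g i) ^ p) ^ (1/p)
      ≤ (((∑' i, f i ^ p) ^ (1/p) + (∑' i, g i ^ p) ^ (1/p)) ^ p) ^ (1/p) :=
        ENNReal.rpow_le_rpow key (by positivity)
    _ = _ := rpow_pinv hp0 _

lemma cesTerm_add_le (hM : IsOrliczFunction M) (d₁ d₂ : ℕ → ℝ) {ρ₁ ρ₂ : ℝ}
    (h1 : 0 < ρ₁) (h2 : 0 < ρ₂) (i : ℕ) :
    cesTerm M (fun k => d₁ k + d₂ k) (ρ₁ + ρ₂) i ≤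
      ρ₁ / (ρ₁ + ρ₂) * cesTerm M d₁ ρ₁ i + ρ₂ / (ρ₁ + ρ₂) * cesTerm M d₂ ρ₂ i := by
  unfold cesTerm
  rw [mul_left_comm (ρ₁ / (ρ₁ + ρ₂)), mul_left_comm (ρ₂ / (ρ₁ + ρ₂)), ← mul_add]
  refine mul_le_mul_of_nonneg_left ?_ (by positivity)
  calc ∑ k ∈ Finset.range (i + 1), M (|(fun k => d₁ k + d₂ k) k| / (ρ₁ + ρ₂))
      ≤ ∑ k ∈ Finset.range (i + 1),
          (ρ₁ / (ρ₁ + ρ₂) * M (|d₁ k| / ρ₁) + ρ₂ / (ρ₁ + ρ₂) * M (|d₂ k| / ρ₂)) :=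
        Finset.sum_le_sum fun k _ => M_tri hM h1 h2
    _ = _ := by rw [Finset.sum_add_distrib, Finset.mul_sum, Finset.mul_sum]

/-- Minkowski-type inequality for the Luxemburg expression. -/
lemma mink (hM : IsOrliczFunction M) (hp : 1 ≤ p) (d₁ d₂ : ℕ → ℝ) {ρ₁ ρ₂ : ℝ}
    (h1 : 0 < ρ₁) (h2 : 0 < ρ₂) :
    (cesaroSum M p (fun k => d₁ k + d₂ k) (ρ₁ + ρ₂)) ^ (1/p) ≤
      ENNReal.ofReal (ρ₁ / (ρ₁ + ρ₂)) * (cesaroSum M p d₁ ρ₁) ^ (1/p) +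
      ENNReal.ofReal (ρ₂ / (ρ₁ + ρ₂)) * (cesaroSum M p d₂ ρ₂) ^ (1/p) := by
  have hp0 : 0 < p := lt_of_lt_of_le one_pos hp
  have h12 : 0 < ρ₁ + ρ₂ := by linarith
  have hpt : ∀ i, ENNReal.ofReal (cesTerm M (fun k => d₁ k + d₂ k) (ρ₁ + ρ₂) i) ≤
      ENNReal.ofReal (ρ₁ / (ρ₁ + ρ₂)) * ENNReal.ofReal (cesTerm M d₁ ρ₁ i) +
      ENNReal.ofReal (ρ₂ / (ρ₁ + ρ₂)) * ENNReal.ofReal (cesTerm M d₂ ρ₂ i) := by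
    intro i
    rw [← ENNReal.ofReal_mul (by positivity), ← ENNReal.ofReal_mul (by positivity),
      ← ENNReal.ofReal_add
        (mul_nonneg (by positivity) (cesTerm_nonneg hM h1 d₁ i))
        (mul_nonneg (by positivity) (cesTerm_nonneg hM h2 d₂ i))]
    exact ENNReal.ofReal_le_ofReal (cesTerm_add_le hM d₁ d₂ h1 h2 i)
  have hstep : cesaroSum M p (fun k => d₁ k + d₂ k) (ρ₁ + ρ₂) ≤
      ∑' i, (ENNReal.ofReal (ρ₁ / (ρ₁ + ρ₂)) * ENNReal.ofReal (cesTerm M d₁ ρ₁ i) +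
             ENNReal.ofReal (ρ₂ / (ρ₁ + ρ₂)) * ENNReal.ofReal (cesTerm M d₂ ρ₂ i)) ^ p :=
    ENNReal.tsum_le_tsum fun i => ENNReal.rpow_le_rpow (hpt i) hp0.le
  have hpow : ∀ (c : ℝ≥0∞) (T : ℕ → ℝ≥0∞),
      (∑' i, (c * T i) ^ p) ^ (1/p) = c * (∑' i, T i ^ p) ^ (1/p) := by
    intro c T
    have heq : ∀ i, (c * T i) ^ p = c ^ p * T i ^ p := fun i =>
      ENNReal.mul_rpow_of_nonneg _ _ hp0.le
    simp_rw [heq]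
    rw [ENNReal.tsum_mul_left, ENNReal.mul_rpow_of_nonneg _ _ (by positivity : (0:ℝ) ≤ 1/p),
      rpow_pinv hp0]
  calc (cesaroSum M p (fun k => d₁ k + d₂ k) (ρ₁ + ρ₂)) ^ (1/p)
      ≤ (∑' i, (ENNReal.ofReal (ρ₁ / (ρ₁ + ρ₂)) * ENNReal.ofReal (cesTerm M d₁ ρ₁ i) +
             ENNReal.ofReal (ρ₂ / (ρ₁ + ρ₂)) * ENNReal.ofReal (cesTerm M d₂ ρ₂ i)) ^ p) ^ (1/p) :=
        ENNReal.rpow_le_rpow hstep (by positivity)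
    _ ≤ (∑' i, (ENNReal.ofReal (ρ₁ / (ρ₁ + ρ₂)) * ENNReal.ofReal (cesTerm M d₁ ρ₁ i)) ^ p) ^ (1/p)
        + (∑' i, (ENNReal.ofReal (ρ₂ / (ρ₁ + ρ₂)) * ENNReal.ofReal (cesTerm M d₂ ρ₂ i)) ^ p) ^ (1/p) :=
        lp_tsum hp _ _
    _ = _ := by rw [hpow, hpow]; rfl

/-- The set whose infimum defines the Luxemburg-type norm. -/
def Sset (M : ℝ → ℝ) (p : ℝ) (d : ℕ → ℝ) : Set ℝ :=
  {ρ : ℝ | 0 < ρ ∧ (cesaroSum M p d ρ) ^ (1 / p) ≤ 1}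

lemma Sset_bddBelow (M : ℝ → ℝ) (p : ℝ) (d : ℕ → ℝ) : BddBelow (Sset M p d) :=
  ⟨0, fun ρ hρ => hρ.1.le⟩

lemma Sset_inf_nonneg (M : ℝ → ℝ) (p : ℝ) (d : ℕ → ℝ) : 0 ≤ sInf (Sset M p d) :=
  Real.sInf_nonneg fun ρ hρ => hρ.1.le

lemma mem_S_upward (hM : IsOrliczFunction M) (hp0 : 0 < p) {d : ℕ → ℝ} {ρ ρ' : ℝ}
    (h : ρ ∈ Sset M p d) (hle : ρ ≤ ρ') : ρ' ∈ Sset M p d :=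
  ⟨lt_of_lt_of_le h.1 hle,
    le_trans (ENNReal.rpow_le_rpow (cesaroSum_anti hM hp0 h.1 hle d) (by positivity)) h.2⟩

lemma S_add (hM : IsOrliczFunction M) (hp : 1 ≤ p) {d₁ d₂ : ℕ → ℝ} {ρ₁ ρ₂ : ℝ}
    (h1 : ρ₁ ∈ Sset M p d₁) (h2 : ρ₂ ∈ Sset M p d₂) :
    (ρ₁ + ρ₂) ∈ Sset M p (fun k => d₁ k + d₂ k) := by
  have h12 : 0 < ρ₁ + ρ₂ := by linarith [h1.1, h2.1]
  refine ⟨h12, ?_⟩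
  refine le_trans (mink hM hp d₁ d₂ h1.1 h2.1) ?_
  calc ENNReal.ofReal (ρ₁ / (ρ₁ + ρ₂)) * (cesaroSum M p d₁ ρ₁) ^ (1/p) +
      ENNReal.ofReal (ρ₂ / (ρ₁ + ρ₂)) * (cesaroSum M p d₂ ρ₂) ^ (1/p)
      ≤ ENNReal.ofReal (ρ₁ / (ρ₁ + ρ₂)) * 1 + ENNReal.ofReal (ρ₂ / (ρ₁ + ρ₂)) * 1 := by
        gcongr
        · exact h1.2
        · exact h2.2
    _ = ENNReal.ofReal (ρ₁ / (ρ₁ + ρ₂) + ρ₂ / (ρ₁ + ρ₂)) := by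
        rw [mul_one, mul_one,
          ENNReal.ofReal_add (div_nonneg h1.1.le h12.le) (div_nonneg h2.1.le h12.le)]
    _ = 1 := by rw [← add_div, div_self h12.ne', ENNReal.ofReal_one]

lemma cesaro_add_finite (hM : IsOrliczFunction M) (hp : 1 ≤ p) {d₁ d₂ : ℕ → ℝ} {ρ₁ ρ₂ : ℝ}
    (h1 : 0 < ρ₁) (h2 : 0 < ρ₂) (hf1 : cesaroSum M p d₁ ρ₁ < ⊤) (hf2 : cesaroSum M p d₂ ρ₂ < ⊤) :
    cesaroSum M p (fun k => d₁ k + d₂ k) (ρ₁ + ρ₂) < ⊤ := by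
  have hp0 : 0 < p := lt_of_lt_of_le one_pos hp
  have hkey := mink hM hp d₁ d₂ h1 h2
  have hfin : ENNReal.ofReal (ρ₁ / (ρ₁ + ρ₂)) * (cesaroSum M p d₁ ρ₁) ^ (1/p) +
      ENNReal.ofReal (ρ₂ / (ρ₁ + ρ₂)) * (cesaroSum M p d₂ ρ₂) ^ (1/p) < ⊤ := by
    refine ENNReal.add_lt_top.2 ⟨?_, ?_⟩
    · exact ENNReal.mul_lt_top ENNReal.ofReal_lt_top
        (ENNReal.rpow_lt_top_of_nonneg (by positivity) hf1.ne)
    · exact ENNReal.mul_lt_top ENNReal.ofReal_lt_top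
        (ENNReal.rpow_lt_top_of_nonneg (by positivity) hf2.ne)
  by_contra htop
  rw [not_lt, top_le_iff] at htop
  rw [htop, ENNReal.top_rpow_of_pos (by positivity)] at hkey
  exact absurd (lt_of_le_of_lt hkey hfin) (lt_irrefl ⊤)

lemma cesaro_shrink (hM : IsOrliczFunction M) (hp0 : 0 < p) (d : ℕ → ℝ) {ρ t : ℝ}
    (hρ : 0 < ρ) (ht : 1 ≤ t) :
    cesaroSum M p d (t * ρ) ≤ ENNReal.ofReal (1 / t) ^ p * cesaroSum M p d ρ := by
  have ht0 : 0 < t := lt_of_lt_of_le one_pos ht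
  unfold cesaroSum
  rw [← ENNReal.tsum_mul_left]
  refine ENNReal.tsum_le_tsum fun i => ?_
  rw [← ENNReal.mul_rpow_of_nonneg _ _ hp0.le, ← ENNReal.ofReal_mul (by positivity)]
  refine ENNReal.rpow_le_rpow (ENNReal.ofReal_le_ofReal ?_) hp0.le
  unfold cesTerm
  rw [mul_left_comm]
  refine mul_le_mul_of_nonneg_left ?_ (by positivity)
  rw [Finset.mul_sum]
  refine Finset.sum_le_sum fun k _ => ?_
  have harg : |d k| / (t * ρ) = (1 / t) * (|d k| / ρ) := by field_simp
  rw [harg]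
  exact M_shrink hM (by positivity) (by positivity) (by rw [div_le_one ht0]; exact ht)

lemma exists_mem_S (hM : IsOrliczFunction M) (hp : 1 ≤ p) {d : ℕ → ℝ}
    (h : ∃ ρ > 0, cesaroSum M p d ρ < ⊤) : (Sset M p d).Nonempty := by
  have hp0 : 0 < p := lt_of_lt_of_le one_pos hp
  obtain ⟨ρ, hρ, hfin⟩ := h
  set c := (cesaroSum M p d ρ).toReal with hc
  have hc0 : 0 ≤ c := ENNReal.toReal_nonneg
  set t := max 1 (c ^ (1/p)) with htdef
  have ht1 : (1:ℝ) ≤ t := le_max_left _ _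
  have ht0 : (0:ℝ) < t := lt_of_lt_of_le one_pos ht1
  refine ⟨t * ρ, by positivity, ?_⟩
  have h1 := cesaro_shrink hM hp0 d hρ ht1
  have h2 : ENNReal.ofReal (1 / t) ^ p * cesaroSum M p d ρ ≤ 1 := by
    rw [← ENNReal.ofReal_toReal hfin.ne, ← hc,
      ENNReal.ofReal_rpow_of_nonneg (by positivity) hp0.le,
      ← ENNReal.ofReal_mul (by positivity), ENNReal.ofReal_le_one]
    have htp : c ≤ t ^ p := by
      calc c = (c ^ (1/p)) ^ p := by
            rw [← Real.rpow_mul hc0, one_div_mul_cancel hp0.ne', Real.rpow_one]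
        _ ≤ t ^ p := Real.rpow_le_rpow (Real.rpow_nonneg hc0 _) (le_max_right _ _) hp0.le
    have htpos : (0:ℝ) < t ^ p := Real.rpow_pos_of_pos ht0 p
    calc (1 / t) ^ p * c = c / t ^ p := by
          rw [one_div, Real.inv_rpow ht0.le, inv_mul_eq_div]
      _ ≤ 1 := (div_le_one htpos).2 htp
  have h3 : cesaroSum M p d (t * ρ) ≤ 1 := h1.trans h2
  exact (rpow_le_one_iff' hp0 _).2 h3

lemma memS_M_le (hM : IsOrliczFunction M) (hp : 1 ≤ p) {d : ℕ → ℝ} {ρ : ℝ}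
    (h : ρ ∈ Sset M p d) (k : ℕ) : M (|d k| / ρ) ≤ (k : ℝ) + 1 := by
  have hp0 : 0 < p := lt_of_lt_of_le one_pos hp
  have hρ : 0 < ρ := h.1
  have hsum : cesaroSum M p d ρ ≤ 1 := (rpow_le_one_iff' hp0 _).1 h.2
  have hterm : ENNReal.ofReal (cesTerm M d ρ k) ≤ 1 := by
    have h1 : ENNReal.ofReal (cesTerm M d ρ k) ^ p ≤ 1 :=
      le_trans (ENNReal.le_tsum k) hsum
    calc ENNReal.ofReal (cesTerm M d ρ k)
        = (ENNReal.ofReal (cesTerm M d ρ k) ^ p) ^ (1/p) := (rpow_pinv hp0 _).symm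
      _ ≤ 1 ^ (1/p) := ENNReal.rpow_le_rpow h1 (by positivity)
      _ = 1 := ENNReal.one_rpow _
  rw [ENNReal.ofReal_le_one] at hterm
  unfold cesTerm at hterm
  have hkpos : (0:ℝ) < (k : ℝ) + 1 := by positivity
  rw [one_div, inv_mul_eq_div, div_le_one hkpos] at hterm
  have hk : M (|d k| / ρ) ≤ ∑ j ∈ Finset.range (k + 1), M (|d j| / ρ) :=
    Finset.single_le_sum (f := fun j => M (|d j| / ρ))
      (fun j _ => M_nonneg hM (div_nonneg (abs_nonneg _) hρ.le))
      (Finset.self_mem_range_succ k)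
  linarith

lemma memS_coord (hM : IsOrliczFunction M) (hp : 1 ≤ p) {d : ℕ → ℝ} {ρ : ℝ}
    (h : ρ ∈ Sset M p d) (k : ℕ) {u : ℝ} (hu : ∀ v ≥ u, ((k : ℝ) + 1) < M v) :
    |d k| ≤ ρ * max u 0 := by
  by_contra hcon
  push_neg at hcon
  have hρ : 0 < ρ := h.1
  have harg : max u 0 < |d k| / ρ := (lt_div_iff₀ hρ).2 (by linarith [hcon])
  have : ((k:ℝ) + 1) < M (|d k| / ρ) :=
    hu _ (le_trans (le_max_left u 0) harg.le)
  linarith [memS_M_le hM hp h k]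

lemma S_inf_zero (hM : IsOrliczFunction M) (hp : 1 ≤ p) {d : ℕ → ℝ}
    (hne : (Sset M p d).Nonempty) (h0 : sInf (Sset M p d) = 0) (k : ℕ) : d k = 0 := by
  by_contra hdk
  have ht : 0 < |d k| := abs_pos.2 hdk
  obtain ⟨u, hu⟩ := Filter.eventually_atTop.1
    (hM.2.2.2.2.2.eventually_gt_atTop ((k : ℝ) + 1))
  set ε := |d k| / (max u 0 + 1) with hεdef
  have hε : 0 < ε := by positivity
  have hlt : sInf (Sset M p d) < ε := h0 ▸ hε
  obtain ⟨ρ, hρS, hρε⟩ := (csInf_lt_iff (Sset_bddBelow M p d) hne).1 hlt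
  have hb := memS_coord hM hp hρS k (fun v hv => hu v hv)
  have hmax : (0:ℝ) ≤ max u 0 := le_max_right u 0
  have heps : ε * (max u 0 + 1) = |d k| := by
    rw [hεdef, div_mul_cancel₀]
    positivity
  nlinarith [hρS.1]

/-- Fatou-type limit argument via finite partial sums. -/
lemma cesaro_le_one_of_tendsto (hM : IsOrliczFunction M) (hp : 1 ≤ p)
    {dseq : ℕ → ℕ → ℝ} {d : ℕ → ℝ} {ρ : ℝ} (hρ : 0 < ρ)
    (hconv : ∀ k, Filter.Tendsto (fun l => dseq l k) Filter.atTop (nhds (d k)))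
    (hbound : ∀ l, cesaroSum M p (dseq l) ρ ≤ 1) :
    cesaroSum M p d ρ ≤ 1 := by
  have hp0 : 0 < p := lt_of_lt_of_le one_pos hp
  rw [cesaroSum, ENNReal.tsum_eq_iSup_sum]
  refine iSup_le fun s => ?_
  have key : ∀ l, ∑ i ∈ s, (cesTerm M (dseq l) ρ i) ^ p ≤ 1 := by
    intro l
    have hb := hbound l
    have heq : ENNReal.ofReal (∑ i ∈ s, (cesTerm M (dseq l) ρ i) ^ p) ≤ 1 := by
      rw [ENNReal.ofReal_sum_of_nonneg
        (fun i _ => Real.rpow_nonneg (cesTerm_nonneg hM hρ _ i) p)]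
      have : ∀ i ∈ s, ENNReal.ofReal ((cesTerm M (dseq l) ρ i) ^ p)
          = ENNReal.ofReal (cesTerm M (dseq l) ρ i) ^ p := fun i _ =>
        (ENNReal.ofReal_rpow_of_nonneg (cesTerm_nonneg hM hρ _ i) hp0.le).symm
      rw [Finset.sum_congr rfl this]
      exact le_trans (ENNReal.sum_le_tsum s) hb
    rwa [ENNReal.ofReal_le_one] at heq
  have hterm : ∀ i, Filter.Tendsto (fun l => (cesTerm M (dseq l) ρ i) ^ p)
      Filter.atTop (nhds ((cesTerm M d ρ i) ^ p)) := by
    intro i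
    have hces : Filter.Tendsto (fun l => cesTerm M (dseq l) ρ i)
        Filter.atTop (nhds (cesTerm M d ρ i)) := by
      unfold cesTerm
      refine Filter.Tendsto.const_mul _ ?_
      refine tendsto_finset_sum _ fun k _ => ?_
      have harg : Filter.Tendsto (fun l => |dseq l k| / ρ) Filter.atTop
          (nhds (|d k| / ρ)) := ((hconv k).abs).div_const ρ
      have harg' : Filter.Tendsto (fun l => |dseq l k| / ρ) Filter.atTop
          (nhdsWithin (|d k| / ρ) (Set.Ici 0)) :=
        tendsto_nhdsWithin_of_tendsto_nhds_of_eventually_within _ harg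
          (Filter.Eventually.of_forall fun l => Set.mem_Ici.2 (by positivity))
      exact (hM.1 (|d k| / ρ)
        (Set.mem_Ici.2 (div_nonneg (abs_nonneg _) hρ.le))).tendsto.comp harg'
    exact ((Real.continuousAt_rpow_const _ p (Or.inr hp0.le)).tendsto).comp hces
  have hsl : Filter.Tendsto (fun l => ∑ i ∈ s, (cesTerm M (dseq l) ρ i) ^ p)
      Filter.atTop (nhds (∑ i ∈ s, (cesTerm M d ρ i) ^ p)) :=
    tendsto_finset_sum _ fun i _ => hterm i
  have hle : ∑ i ∈ s, (cesTerm M d ρ i) ^ p ≤ 1 :=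
    le_of_tendsto hsl (Filter.Eventually.of_forall key)
  calc ∑ i ∈ s, ENNReal.ofReal (cesTerm M d ρ i) ^ p
      = ENNReal.ofReal (∑ i ∈ s, (cesTerm M d ρ i) ^ p) := by
        rw [ENNReal.ofReal_sum_of_nonneg
          (fun i _ => Real.rpow_nonneg (cesTerm_nonneg hM hρ _ i) p)]
        exact Finset.sum_congr rfl fun i _ =>
          ENNReal.ofReal_rpow_of_nonneg (cesTerm_nonneg hM hρ _ i) hp0.le
    _ ≤ 1 := ENNReal.ofReal_le_one.2 hle

lemma S_nonempty_pair (hM : IsOrliczFunction M) (hp : 1 ≤ p) {m n : ℕ} {x y : ℕ → ℝ}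
    (hx : x ∈ CpMDelta M p m n) (hy : y ∈ CpMDelta M p m n) :
    (Sset M p (fun k => delta m n x k - delta m n y k)).Nonempty := by
  obtain ⟨ρ₁, hρ₁, hf1⟩ := hx
  obtain ⟨ρ₂, hρ₂, hf2⟩ := hy
  apply exists_mem_S hM hp
  refine ⟨ρ₁ + ρ₂, by linarith, ?_⟩
  have hf2' : cesaroSum M p (fun k => -(delta m n y k)) ρ₂ < ⊤ := by
    rw [cesaro_congr_abs (fun k => abs_neg _)]
    exact hf2
  have h2 := cesaro_add_finite hM hp hρ₁ hρ₂ hf1 hf2'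
  have hfe : (fun k => delta m n x k + -(delta m n y k))
      = fun k => delta m n x k - delta m n y k :=
    funext fun k => (sub_eq_add_neg _ _).symm
  rwa [hfe] at h2

lemma f1_eq (M : ℝ → ℝ) (p : ℝ) (m n : ℕ) (x y : ℕ → ℝ) :
    f1 M p m n x y = (∑ r ∈ Finset.range (m * n), |x r - y r|) +
      sInf (Sset M p (fun k => delta m n x k - delta m n y k)) := rfl

lemma f1_self (hM : IsOrliczFunction M) (hp : 1 ≤ p) (m n : ℕ) (x : ℕ → ℝ) :
    f1 M p m n x x = 0 := by
  have hp0 : 0 < p := lt_of_lt_of_le one_pos hp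
  rw [f1_eq]
  have hset : Sset M p (fun k => delta m n x k - delta m n x k) = Set.Ioi 0 := by
    ext ρ
    simp only [Sset, Set.mem_setOf_eq, Set.mem_Ioi]
    constructor
    · exact fun h => h.1
    · intro h
      refine ⟨h, ?_⟩
      rw [cesaro_congr_abs (d' := fun _ => (0:ℝ)) (fun k => by rw [sub_self]) ρ,
        cesaro_zero hM hp0 h, ENNReal.zero_rpow_of_pos (by positivity)]
      exact zero_le_one
  rw [hset, csInf_Ioi]
  simp

lemma f1_comm (M : ℝ → ℝ) (p : ℝ) (m n : ℕ) (x y : ℕ → ℝ) :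
    f1 M p m n x y = f1 M p m n y x := by
  rw [f1_eq, f1_eq]
  congr 1
  · exact Finset.sum_congr rfl fun r _ => abs_sub_comm _ _
  · congr 1
    unfold Sset
    ext ρ
    simp only [Set.mem_setOf_eq]
    rw [cesaro_congr_abs (d' := fun k => delta m n y k - delta m n x k)
      (fun k => abs_sub_comm _ _) ρ]

lemma f1_triangle (hM : IsOrliczFunction M) (hp : 1 ≤ p) {m n : ℕ} {x y z : ℕ → ℝ}
    (hx : x ∈ CpMDelta M p m n) (hy : y ∈ CpMDelta M p m n) (hz : z ∈ CpMDelta M p m n) :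
    f1 M p m n x z ≤ f1 M p m n x y + f1 M p m n y z := by
  rw [f1_eq, f1_eq, f1_eq]
  have hsum : (∑ r ∈ Finset.range (m * n), |x r - z r|) ≤
      (∑ r ∈ Finset.range (m * n), |x r - y r|) +
      (∑ r ∈ Finset.range (m * n), |y r - z r|) := by
    rw [← Finset.sum_add_distrib]
    refine Finset.sum_le_sum fun r _ => ?_
    calc |x r - z r| = |(x r - y r) + (y r - z r)| := by ring_nf
      _ ≤ |x r - y r| + |y r - z r| := abs_add_le _ _
  have hne1 := S_nonempty_pair hM hp hx hy
  have hne2 := S_nonempty_pair hM hp hy hz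
  have key : ∀ ρ₁ ∈ Sset M p (fun k => delta m n x k - delta m n y k),
      ∀ ρ₂ ∈ Sset M p (fun k => delta m n y k - delta m n z k),
      sInf (Sset M p (fun k => delta m n x k - delta m n z k)) ≤ ρ₁ + ρ₂ := by
    intro ρ₁ h₁ ρ₂ h₂
    have hmem := S_add hM hp h₁ h₂
    have hfe : (fun k => (delta m n x k - delta m n y k) + (delta m n y k - delta m n z k))
        = fun k => delta m n x k - delta m n z k := funext fun k => by ring
    rw [hfe] at hmem
    exact csInf_le (Sset_bddBelow M p _) hmem
  have h1 : ∀ ρ₂ ∈ Sset M p (fun k => delta m n y k - delta m n z k),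
      sInf (Sset M p (fun k => delta m n x k - delta m n z k)) ≤
      sInf (Sset M p (fun k => delta m n x k - delta m n y k)) + ρ₂ := by
    intro ρ₂ h₂
    rw [← sub_le_iff_le_add]
    refine le_csInf hne1 fun ρ₁ h₁ => ?_
    linarith [key ρ₁ h₁ ρ₂ h₂]
  have h2 : sInf (Sset M p (fun k => delta m n x k - delta m n z k)) -
      sInf (Sset M p (fun k => delta m n x k - delta m n y k)) ≤
      sInf (Sset M p (fun k => delta m n y k - delta m n z k)) := by
    refine le_csInf hne2 fun ρ₂ h₂ => ?_
    linarith [h1 ρ₂ h₂]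
  linarith

lemma f1_eq_zero (hM : IsOrliczFunction M) (hp : 1 ≤ p) {m n : ℕ} (hm : 1 ≤ m) (hn : 1 ≤ n)
    {x y : ℕ → ℝ} (hx : x ∈ CpMDelta M p m n) (hy : y ∈ CpMDelta M p m n)
    (h : f1 M p m n x y = 0) : x = y := by
  rw [f1_eq] at h
  have hA : 0 ≤ ∑ r ∈ Finset.range (m * n), |x r - y r| :=
    Finset.sum_nonneg fun r _ => abs_nonneg _
  have hB := Sset_inf_nonneg M p (fun k => delta m n x k - delta m n y k)
  have hA0 : ∑ r ∈ Finset.range (m * n), |x r - y r| = 0 := by linarith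
  have hB0 : sInf (Sset M p (fun k => delta m n x k - delta m n y k)) = 0 := by linarith
  have hz : ∀ r < m * n, x r - y r = 0 := by
    intro r hr
    have := (Finset.sum_eq_zero_iff_of_nonneg fun r _ => abs_nonneg _).1 hA0 r
      (Finset.mem_range.2 hr)
    exact abs_eq_zero.1 this
  have hdz : ∀ k, delta m n x k - delta m n y k = 0 :=
    S_inf_zero hM hp (S_nonempty_pair hM hp hx hy) hB0
  have hdz' : ∀ k, delta m n (fun j => x j - y j) k = 0 := fun k => by
    rw [delta_sub]; exact hdz k
  have hall := delta_n_zero m hm n hn (fun j => x j - y j) hz hdz'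
  funext k
  have h5 : x k - y k = 0 := hall k
  linarith

end Analysis

end CpAux

open CpAux Filter

theorem CpDelta_complete_metric (M : ℝ → ℝ) (hM : IsOrliczFunction M) (p : ℝ) (hp : 1 ≤ p)
    (m n : ℕ) (hm : 1 ≤ m) (hn : 1 ≤ n) :
    ∃ inst : MetricSpace (CpMDelta M p m n),
      (∀ a b : CpMDelta M p m n, @dist _ inst.toDist a b = f1 M p m n a.1 b.1) ∧
        @CompleteSpace _ inst.toUniformSpace := by
  classical
  have hp0 : 0 < p := lt_of_lt_of_le one_pos hp
  letI inst : MetricSpace (CpMDelta M p m n) :=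
    { dist := fun a b => f1 M p m n a.1 b.1
      dist_self := fun a => f1_self hM hp m n a.1
      dist_comm := fun a b => f1_comm M p m n a.1 b.1
      dist_triangle := fun a b c => f1_triangle hM hp a.2 b.2 c.2
      eq_of_dist_eq_zero := fun {a b} h =>
        Subtype.ext (f1_eq_zero hM hp hm hn a.2 b.2 h) }
  refine ⟨inst, fun a b => rfl, ?_⟩
  refine Metric.complete_of_cauchySeq_tendsto fun u hu => ?_
  rw [Metric.cauchySeq_iff] at hu
  have hdd : ∀ (a b : CpMDelta M p m n), dist a b =
      (∑ r ∈ Finset.range (m * n), |a.1 r - b.1 r|) +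
      sInf (Sset M p (fun k => delta m n a.1 k - delta m n b.1 k)) := fun a b => rfl
  -- dist dominates the Luxemburg part and each initial coordinate
  have hdistS : ∀ (j l : ℕ) (ε : ℝ), 0 < ε → dist (u j) (u l) < ε →
      cesaroSum M p (fun k => delta m n (u j).1 k - delta m n (u l).1 k) ε ≤ 1 := by
    intro j l ε hε hd
    rw [hdd] at hd
    have hA : 0 ≤ ∑ r ∈ Finset.range (m * n), |(u j).1 r - (u l).1 r| :=
      Finset.sum_nonneg fun r _ => abs_nonneg _
    have hB : sInf (Sset M p (fun k => delta m n (u j).1 k - delta m n (u l).1 k)) < ε := by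
      linarith
    obtain ⟨ρ, hρS, hρε⟩ := (csInf_lt_iff (Sset_bddBelow M p _)
      (S_nonempty_pair hM hp (u j).2 (u l).2)).1 hB
    exact (rpow_le_one_iff' hp0 _).1 (mem_S_upward hM hp0 hρS hρε.le).2
  -- limits of the first m*n coordinates
  have hc1 : ∀ r, ∃ L, r < m * n → Tendsto (fun j => (u j).1 r) atTop (nhds L) := by
    intro r
    by_cases hr : r < m * n
    · have hcs : CauchySeq (fun j => (u j).1 r) := by
        rw [Metric.cauchySeq_iff]
        intro ε hε
        obtain ⟨N, hN⟩ := hu ε hε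
        refine ⟨N, fun j hj l hl => ?_⟩
        have hd := hN j hj l hl
        rw [hdd] at hd
        have hB := Sset_inf_nonneg M p (fun k => delta m n (u j).1 k - delta m n (u l).1 k)
        have h1 : |(u j).1 r - (u l).1 r| ≤
            ∑ r' ∈ Finset.range (m * n), |(u j).1 r' - (u l).1 r'| :=
          Finset.single_le_sum (f := fun r' => |(u j).1 r' - (u l).1 r'|)
            (fun _ _ => abs_nonneg _) (Finset.mem_range.2 hr)
        rw [Real.dist_eq]
        linarith
      obtain ⟨L, hL⟩ := cauchySeq_tendsto_of_complete hcs
      exact ⟨L, fun _ => hL⟩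
    · exact ⟨0, fun h => absurd h hr⟩
  choose a ha using hc1
  -- limits of the differenced coordinates
  have hc2 : ∀ k, ∃ L, Tendsto (fun j => delta m n (u j).1 k) atTop (nhds L) := by
    intro k
    apply cauchySeq_tendsto_of_complete
    rw [Metric.cauchySeq_iff]
    intro ε hε
    obtain ⟨v, hv⟩ := Filter.eventually_atTop.1
      (hM.2.2.2.2.2.eventually_gt_atTop ((k : ℝ) + 1))
    obtain ⟨c, hcdef⟩ : ∃ c : ℝ, c = max v 0 + 1 := ⟨_, rfl⟩
    have hc : 0 < c := by rw [hcdef]; positivity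
    obtain ⟨N, hN⟩ := hu (ε / c) (by positivity)
    refine ⟨N, fun j hj l hl => ?_⟩
    have hd := hN j hj l hl
    rw [hdd] at hd
    have hA : 0 ≤ ∑ r ∈ Finset.range (m * n), |(u j).1 r - (u l).1 r| :=
      Finset.sum_nonneg fun r _ => abs_nonneg _
    have hB : sInf (Sset M p (fun k => delta m n (u j).1 k - delta m n (u l).1 k)) < ε / c := by
      linarith
    obtain ⟨ρ, hρS, hρε⟩ := (csInf_lt_iff (Sset_bddBelow M p _)
      (S_nonempty_pair hM hp (u j).2 (u l).2)).1 hB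
    have hb := memS_coord hM hp hρS k hv
    rw [Real.dist_eq]
    have hvc : max v 0 ≤ c := by rw [hcdef]; linarith
    have h4 : ρ * max v 0 ≤ ρ * c := by nlinarith [hρS.1.le]
    have h5 : ρ * c < (ε / c) * c := by nlinarith
    have h6 : (ε / c) * c = ε := div_mul_cancel₀ ε hc.ne'
    calc |delta m n (u j).1 k - delta m n (u l).1 k| ≤ ρ * max v 0 := hb
      _ < ε := by linarith
  choose w hw using hc2
  obtain ⟨X, hX0, hXd⟩ := exists_sol m hm n hn a w
  -- the key estimate
  have est : ∀ ε : ℝ, 0 < ε → ∃ N, ∀ j ≥ N,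
      cesaroSum M p (fun k => delta m n (u j).1 k - w k) ε ≤ 1 := by
    intro ε hε
    obtain ⟨N, hN⟩ := hu ε hε
    refine ⟨N, fun j hj => ?_⟩
    refine cesaro_le_one_of_tendsto hM hp hε
      (dseq := fun l k => delta m n (u j).1 k - delta m n (u (l + N)).1 k) ?_ ?_
    · intro k
      exact tendsto_const_nhds.sub ((hw k).comp (tendsto_add_atTop_nat N))
    · intro l
      exact hdistS j (l + N) ε hε (hN j hj (l + N) (Nat.le_add_left N l))
  -- membership of the limit
  have hmem : X ∈ CpMDelta M p m n := by
    obtain ⟨N₁, hN₁⟩ := est 1 one_pos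
    have h1 : cesaroSum M p (fun k => delta m n (u N₁).1 k - w k) 1 ≤ 1 := hN₁ N₁ le_rfl
    obtain ⟨ρN, hρN, hfinN⟩ := (u N₁).2
    have h1' : cesaroSum M p (fun k => w k - delta m n (u N₁).1 k) 1 < ⊤ := by
      rw [cesaro_congr_abs (d' := fun k => delta m n (u N₁).1 k - w k)
        (fun k => abs_sub_comm _ _)]
      exact lt_of_le_of_lt h1 ENNReal.one_lt_top
    have h2 := cesaro_add_finite hM hp hρN one_pos hfinN h1'
    refine ⟨ρN + 1, by linarith, ?_⟩
    have hfe : (fun k => delta m n (u N₁).1 k + (w k - delta m n (u N₁).1 k))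
        = delta m n X := funext fun k => by rw [← hXd k]; ring
    rwa [hfe] at h2
  -- convergence to the limit
  refine ⟨⟨X, hmem⟩, ?_⟩
  rw [Metric.tendsto_atTop]
  intro ε hε
  have hsum0 : Tendsto (fun j => ∑ r ∈ Finset.range (m * n), |(u j).1 r - X r|)
      atTop (nhds 0) := by
    have hterm : ∀ r ∈ Finset.range (m * n),
        Tendsto (fun j => |(u j).1 r - X r|) atTop (nhds 0) := by
      intro r hr
      have hr' := Finset.mem_range.1 hr
      have h1 : Tendsto (fun j => (u j).1 r - X r) atTop (nhds (a r - X r)) :=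
        (ha r hr').sub tendsto_const_nhds
      have h0 : a r - X r = 0 := by rw [hX0 r hr']; ring
      rw [h0] at h1
      simpa using h1.abs
    have := tendsto_finset_sum (Finset.range (m * n)) hterm
    simpa using this
  obtain ⟨N₂, hN₂⟩ := Filter.eventually_atTop.1
    (hsum0.eventually_lt_const (by positivity : (0:ℝ) < ε / 2))
  obtain ⟨N₃, hN₃⟩ := est (ε / 4) (by positivity)
  refine ⟨max N₂ N₃, fun j hj => ?_⟩
  have hA := hN₂ j (le_trans (le_max_left _ _) hj)
  have hBmem : (ε / 4) ∈ Sset M p (fun k => delta m n (u j).1 k - delta m n X k) := by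
    have h1 := hN₃ j (le_trans (le_max_right _ _) hj)
    have hfe : (fun k => delta m n (u j).1 k - w k)
        = fun k => delta m n (u j).1 k - delta m n X k := funext fun k => by rw [hXd k]
    rw [hfe] at h1
    exact ⟨by positivity, (rpow_le_one_iff' hp0 _).2 h1⟩
  have hB : sInf (Sset M p (fun k => delta m n (u j).1 k - delta m n X k)) ≤ ε / 4 :=
    csInf_le (Sset_bddBelow M p _) hBmem
  rw [hdd]
  linarith
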